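/- arXiv:1510.03878 — 9 statements merged into one kernel-verified Lean document; each statement's English description precedes it below -/
import Mathlib

section
/- For every rotation matrix X ∈ SO(3), the identity ‖ψ(X)‖² = 4 |X|_I² (1 − |X|_I²) holds, where |X|_I² = tr(I − X)/4. -/
open Matrix

noncomputable section

/-- Skew-symmetric matrix `[x]ₓ` such that `[x]ₓ y = x × y`. -/
def skew (x : Fin 3 → ℝ) : Matrix (Fin 3) (Fin 3) ℝ :=
  !![0, -x 2, x 1; x 2, 0, -x 0; -x 1, x 0, 0]

/-- The special orthogonal group SO(3): `RᵀR = I` and `det R = 1`. -/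
def SO3 (R : Matrix (Fin 3) (Fin 3) ℝ) : Prop :=
  Rᵀ * R = 1 ∧ R.det = 1

/-- Euclidean inner product on ℝ³. -/
def dotp (x y : Fin 3 → ℝ) : ℝ := ∑ i, x i * y i

/-- Squared Euclidean norm on ℝ³. -/
def norm2 (x : Fin 3 → ℝ) : ℝ := dotp x x

/-- Vector cross product on ℝ³. -/
def cross (x y : Fin 3 → ℝ) : Fin 3 → ℝ :=
  ![x 1 * y 2 - x 2 * y 1, x 2 * y 0 - x 0 * y 2, x 0 * y 1 - x 1 * y 0]

/-- `ψ(A) = vex(P_a(A))`: the vex of the skew-symmetric part of `A`. -/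
def psi (A : Matrix (Fin 3) (Fin 3) ℝ) : Fin 3 → ℝ :=
  ![(A 2 1 - A 1 2) / 2, (A 0 2 - A 2 0) / 2, (A 1 0 - A 0 1) / 2]

/-- Normalized attitude distance squared `|X|_I² = tr(I − X)/4`. -/
def attDist2 (X : Matrix (Fin 3) (Fin 3) ℝ) : ℝ := (1 - X).trace / 4

/-- Rodrigues rotation matrix `𝓡(θ,u) = I + sin θ [u]ₓ + (1 − cos θ)[u]ₓ²`. -/
def rodrigues (θ : ℝ) (u : Fin 3 → ℝ) : Matrix (Fin 3) (Fin 3) ℝ :=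
  1 + Real.sin θ • skew u + (1 - Real.cos θ) • (skew u * skew u)

/-- For every `X ∈ SO(3)`, `‖ψ(X)‖² = 4 |X|_I² (1 − |X|_I²)`. -/
theorem stmt3 (X : Matrix (Fin 3) (Fin 3) ℝ) (hX : SO3 X) :
    norm2 (psi X) = 4 * attDist2 X * (1 - attDist2 X) := by
  obtain ⟨h1, hdet⟩ := hX
  have h1' : X * Xᵀ = 1 := mul_eq_one_comm.mp h1
  have hadj : X.adjugate = Xᵀ := by
    have h2 : X * X.adjugate = 1 := by rw [Matrix.mul_adjugate, hdet, one_smul]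
    calc X.adjugate = 1 * X.adjugate := (one_mul _).symm
      _ = (Xᵀ * X) * X.adjugate := by rw [h1]
      _ = Xᵀ * (X * X.adjugate) := by rw [Matrix.mul_assoc]
      _ = Xᵀ := by rw [h2, mul_one]
  have hE0 : X 0 0 * X 0 0 + X 0 1 * X 0 1 + X 0 2 * X 0 2 = 1 := by
    have := congrFun (congrFun h1' 0) 0
    simpa [Matrix.mul_apply, Fin.sum_univ_three, Matrix.one_apply] using this
  have hE1 : X 1 0 * X 1 0 + X 1 1 * X 1 1 + X 1 2 * X 1 2 = 1 := by
    have := congrFun (congrFun h1' 1) 1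
    simpa [Matrix.mul_apply, Fin.sum_univ_three, Matrix.one_apply] using this
  have hE2 : X 2 0 * X 2 0 + X 2 1 * X 2 1 + X 2 2 * X 2 2 = 1 := by
    have := congrFun (congrFun h1' 2) 2
    simpa [Matrix.mul_apply, Fin.sum_univ_three, Matrix.one_apply] using this
  have hC0 : X 1 1 * X 2 2 - X 1 2 * X 2 1 = X 0 0 := by
    have := congrFun (congrFun hadj 0) 0
    simpa [Matrix.adjugate_fin_three] using this
  have hC1 : X 0 0 * X 2 2 - X 0 2 * X 2 0 = X 1 1 := by
    have := congrFun (congrFun hadj 1) 1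
    simpa [Matrix.adjugate_fin_three] using this
  have hC2 : X 0 0 * X 1 1 - X 0 1 * X 1 0 = X 2 2 := by
    have := congrFun (congrFun hadj 2) 2
    simpa [Matrix.adjugate_fin_three] using this
  simp only [norm2, dotp, psi, attDist2, Matrix.trace_fin_three, Fin.sum_univ_three,
    Matrix.sub_apply, Matrix.one_apply]
  norm_num
  simp only [Matrix.cons_val_two, Matrix.tail_cons, Matrix.head_cons]
  linear_combination (hE0 + hE1 + hE2) / 4 + (hC0 + hC1 + hC2) / 2
end
end

section
/- Let η ∈ ℝ, ε ∈ ℝ³, k ∈ ℝ, and let u ∈ ℝ³ be a unit vector. Define ε_q := k η ‖ε‖² u + √(1 − k²‖ε‖⁴) ε + k ‖ε‖² (ε × u), assuming k²‖ε‖⁴ ≤ 1. Then ‖ε_q‖² = ‖ε‖² + k² η² ‖ε‖⁴ − k² ‖ε‖⁴ (ε·u)² + 2 k η ‖ε‖² √(1 − k²‖ε‖⁴) (ε·u). -/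
open Matrix

noncomputable section

/-- With `ε_q = kη‖ε‖² u + √(1 − k²‖ε‖⁴) ε + k‖ε‖² (ε × u)` and
`k²‖ε‖⁴ ≤ 1`, one has
`‖ε_q‖² = ‖ε‖² + k²η²‖ε‖⁴ − k²‖ε‖⁴(ε·u)² + 2kη‖ε‖²√(1 − k²‖ε‖⁴)(ε·u)`. -/
theorem stmt8 (η k : ℝ) (ε u : Fin 3 → ℝ) (hu : norm2 u = 1)
    (hk : k ^ 2 * norm2 ε ^ 2 ≤ 1) :
    norm2 ((k * η * norm2 ε) • u +
        Real.sqrt (1 - k ^ 2 * norm2 ε ^ 2) • ε + (k * norm2 ε) • cross ε u) =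
      norm2 ε + k ^ 2 * η ^ 2 * norm2 ε ^ 2 - k ^ 2 * norm2 ε ^ 2 * dotp ε u ^ 2 +
        2 * k * η * norm2 ε * Real.sqrt (1 - k ^ 2 * norm2 ε ^ 2) * dotp ε u := by
  have hs : Real.sqrt (1 - k ^ 2 * norm2 ε ^ 2) ^ 2 = 1 - k ^ 2 * norm2 ε ^ 2 :=
    Real.sq_sqrt (by linarith)
  set s := Real.sqrt (1 - k ^ 2 * norm2 ε ^ 2) with hsdef
  simp only [norm2, dotp, cross, Fin.sum_univ_three, Pi.add_apply, Pi.smul_apply,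
    smul_eq_mul, Matrix.cons_val_zero, Matrix.cons_val_one, Matrix.head_cons,
    Matrix.cons_val_two, Matrix.tail_cons] at *
  linear_combination (ε 0 ^ 2 + ε 1 ^ 2 + ε 2 ^ 2) * hs +
    (k ^ 2 * η ^ 2 * (ε 0 ^ 2 + ε 1 ^ 2 + ε 2 ^ 2) ^ 2 +
      k ^ 2 * (ε 0 ^ 2 + ε 1 ^ 2 + ε 2 ^ 2) ^ 3) * hu
end
end

section
/- Let (η, ε) ∈ ℝ × ℝ³ with η² + ‖ε‖² = 1, let 0 ≤ k, k²‖ε‖⁴ ≤ 1, and let u ∈ ℝ³ be a unit vector. Define ε_q := k η ‖ε‖² u + √(1 − k²‖ε‖⁴) ε + k ‖ε‖² (ε × u). Then ‖ε_q‖² ≤ ‖ε‖² (1 + k + k²/4). -/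
open Matrix

noncomputable section

lemma key_expand (a b c : ℝ) (ε u : Fin 3 → ℝ) :
    norm2 (a • u + b • ε + c • cross ε u) =
      a ^ 2 * norm2 u + b ^ 2 * norm2 ε +
        c ^ 2 * (norm2 ε * norm2 u - dotp ε u ^ 2) + 2 * a * b * dotp ε u := by
  simp [norm2, dotp, cross, Fin.sum_univ_three]
  ring

lemma cross_nonneg_ineq (ε u : Fin 3 → ℝ) :
    dotp ε u ^ 2 ≤ norm2 ε * norm2 u := by
  have h : norm2 ε * norm2 u - dotp ε u ^ 2 = norm2 (cross ε u) := by
    simp [norm2, dotp, cross, Fin.sum_univ_three]; ring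
  have h0 : 0 ≤ norm2 (cross ε u) := by
    simp only [norm2, dotp, Fin.sum_univ_three]
    nlinarith [sq_nonneg (cross ε u 0), sq_nonneg (cross ε u 1), sq_nonneg (cross ε u 2)]

  linarith

lemma norm2_nonneg (x : Fin 3 → ℝ) : 0 ≤ norm2 x := by
  simp only [norm2, dotp, Fin.sum_univ_three]
  nlinarith [sq_nonneg (x 0), sq_nonneg (x 1), sq_nonneg (x 2)]

/-- For a unit quaternion `(η, ε)`, `0 ≤ k` with `k²‖ε‖⁴ ≤ 1`
and a unit vector `u`, the warped vector part `ε_q` satisfies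
`‖ε_q‖² ≤ ‖ε‖² (1 + k + k²/4)`. -/
theorem stmt9 (η k : ℝ) (ε u : Fin 3 → ℝ) (hq : η ^ 2 + norm2 ε = 1)
    (hk0 : 0 ≤ k) (hk : k ^ 2 * norm2 ε ^ 2 ≤ 1) (hu : norm2 u = 1) :
    norm2 ((k * η * norm2 ε) • u +
        Real.sqrt (1 - k ^ 2 * norm2 ε ^ 2) • ε + (k * norm2 ε) • cross ε u) ≤
      norm2 ε * (1 + k + k ^ 2 / 4) := by
  have he0 : 0 ≤ norm2 ε := norm2_nonneg ε
  have harg : 0 ≤ 1 - k ^ 2 * norm2 ε ^ 2 := by linarith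
  have hb0 : 0 ≤ Real.sqrt (1 - k ^ 2 * norm2 ε ^ 2) := Real.sqrt_nonneg _
  have hb2 : Real.sqrt (1 - k ^ 2 * norm2 ε ^ 2) ^ 2 = 1 - k ^ 2 * norm2 ε ^ 2 :=
    Real.sq_sqrt harg
  rw [key_expand]
  set e := norm2 ε with he
  set d := dotp ε u with hd
  set b := Real.sqrt (1 - k ^ 2 * e ^ 2) with hbdef
  have hd2 : d ^ 2 ≤ e := by
    have := cross_nonneg_ineq ε u
    rw [hu] at this
    simpa using this
  have hb1 : b ≤ 1 := by nlinarith [sq_nonneg (b - 1)]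
  rw [hu]
  have hη2 : η ^ 2 = 1 - e := by linarith
  have h1b : (0:ℝ) ≤ 1 - b ^ 2 := by nlinarith [sq_nonneg (k * e)]
  have h7 : k ^ 2 * e ^ 2 * η ^ 2 = k ^ 2 * e ^ 2 * (1 - e) := by rw [hη2]
  have h8 : k * e * η ^ 2 = k * e * (1 - e) := by rw [hη2]
  nlinarith [mul_nonneg (mul_nonneg hk0 he0) (sq_nonneg (η * b - d)),
    mul_nonneg (mul_nonneg hk0 he0) (mul_nonneg (sq_nonneg η) h1b),
    mul_le_mul_of_nonneg_left hd2 (mul_nonneg hk0 he0),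
    mul_nonneg (mul_nonneg (sq_nonneg k) he0) (sq_nonneg (2 * e - 1)),
    mul_nonneg (mul_nonneg (sq_nonneg k) (sq_nonneg e)) (sq_nonneg d), h7, h8]
end
end

section
/- Let (η, ε) ∈ ℝ × ℝ³ with η² + ‖ε‖² = 1, let 0 < k < 1/√2, and let u ∈ ℝ³ be a unit vector. Define ε_q := k η ‖ε‖² u + √(1 − k²‖ε‖⁴) ε + k ‖ε‖² (ε × u). Then ‖ε_q‖² ≥ ‖ε‖² (1 − k² − k√(1 − k²)), and the constant 1 − k² − k√(1 − k²) is strictly positive. -/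
open Matrix

noncomputable section

set_option maxHeartbeats 1000000 in
lemma le_of_sq_le_sq' {a b : ℝ} (h : a^2 ≤ b^2) (hb : 0 ≤ b) : a ≤ b := by
  calc a ≤ |a| := le_abs_self a
    _ = Real.sqrt (a^2) := (Real.sqrt_sq_eq_abs a).symm
    _ ≤ Real.sqrt (b^2) := Real.sqrt_le_sqrt h
    _ = b := Real.sqrt_sq hb

set_option maxHeartbeats 1000000 in
lemma stmt10_key (N d η k s r m p w : ℝ) (hN0 : 0 ≤ N) (hη : η^2 = 1 - N) (hd : d^2 ≤ N)
 (hs2 : s^2 = 1 - k^2*N^2) (hs0 : 0 ≤ s) (hr2 : r^2 = 1 - k^2) (hr0 : 0 ≤ r)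
 (hk0 : 0 < k) (hk2 : 2*k^2 < 1)
 (hm0 : 0 ≤ m) (hm2 : m^2 = N) (hp0 : 0 ≤ p) (hp2 : p^2 = 1 - N)
 (hw0 : 0 ≤ w) (hw2 : w^2 = 1 + N) :
 N*(1 - k^2 - k*r) ≤ k^2*η^2*N^2 + s^2*N + k^2*N^2*(N - d^2) + 2*k*η*N*s*d := by
  have hN1 : N ≤ 1 := by nlinarith [sq_nonneg η]
  have hN21 : 0 ≤ k^2*(1 - N^2) := by
    have : 0 ≤ 1 - N^2 := by nlinarith
    positivity
  have hrs : r ≤ s := le_of_sq_le_sq' (by nlinarith) hs0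
  have hpw : (p*w)^2 = (1-N)*(1+N) := by rw [mul_pow, hp2, hw2]
  have hmp2 : (m*p)^2 = N*(1-N) := by rw [mul_pow, hm2, hp2]
  have hmw2 : (m*w)^2 = N*(1+N) := by rw [mul_pow, hm2, hw2]
  have hF1 : s - r ≤ k*(p*w) := by
    apply le_of_sq_le_sq' _ (by positivity)
    have h1 : 0 ≤ r*(s-r) := mul_nonneg hr0 (by linarith)
    nlinarith [h1, hpw]
  have hF2 : 2*(m*p) ≤ 1 := by
    apply le_of_sq_le_sq' _ zero_le_one
    nlinarith [hmp2, sq_nonneg (2*N-1)]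
  have hF3 : 2*(m*w) ≤ 1 + 2*N := by
    apply le_of_sq_le_sq' _ (by linarith)
    nlinarith [hmw2]
  have hdm : |d| ≤ m := le_of_sq_le_sq' (by rw [sq_abs]; nlinarith) hm0
  have hηp : |η| = p := by
    rw [← Real.sqrt_sq hp0, ← Real.sqrt_sq_eq_abs, hp2, hη]
  have hF4 : -(p*m) ≤ η*d := by
    have h1 := neg_abs_le (η*d)
    have h2 : |η*d| ≤ p*m := by
      rw [abs_mul, hηp]; exact mul_le_mul_of_nonneg_left hdm hp0
    linarith
  have A1 : 0 ≤ (2*k*N*s) * (η*d + p*m) :=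
    mul_nonneg (by positivity) (by linarith)
  have A2 : 0 ≤ (2*k*N*(m*p)) * (r + k*(p*w) - s) :=
    mul_nonneg (by positivity) (by linarith)
  have A3 : 0 ≤ (k*N*r) * (1 - 2*(m*p)) :=
    mul_nonneg (by positivity) (by linarith)
  have A4 : 0 ≤ (k^2*N*p^2) * (1 + 2*N - 2*(m*w)) :=
    mul_nonneg (by positivity) (by linarith)
  have A5 : 0 ≤ (k^2*N^2) * (N - d^2) :=
    mul_nonneg (by positivity) (by linarith)
  have hq1 : k^2*N*p^2 = k^2*N*(1-N) := by rw [hp2]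
  have hq2 : k^2*N^2*p^2 = k^2*N^2*(1-N) := by rw [hp2]
  rw [hη, hs2]
  linarith [A1, A2, A3, A4, A5, hq1, hq2]

lemma stmt10_lagrange (e u : Fin 3 → ℝ) :
    norm2 (cross e u) = norm2 e * norm2 u - (dotp e u)^2 := by
  simp [norm2, dotp, cross, Fin.sum_univ_three]
  ring

lemma stmt10_expand (a s b : ℝ) (e u : Fin 3 → ℝ) :
    norm2 (a • u + s • e + b • cross e u) =
      a^2 * norm2 u + s^2 * norm2 e + b^2 * (norm2 e * norm2 u - (dotp e u)^2)
        + 2*a*s*(dotp e u) := by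
  simp [norm2, dotp, cross, Fin.sum_univ_three]
  ring


/-- For a unit quaternion `(η, ε)`, `0 < k < 1/√2` and a unit
vector `u`, the warped vector part `ε_q` satisfies
`‖ε_q‖² ≥ ‖ε‖² (1 − k² − k√(1 − k²))`, and `1 − k² − k√(1 − k²) > 0`. -/
theorem stmt10 (η k : ℝ) (ε u : Fin 3 → ℝ) (hq : η ^ 2 + norm2 ε = 1)
    (hk0 : 0 < k) (hk : k < 1 / Real.sqrt 2) (hu : norm2 u = 1) :
    norm2 ε * (1 - k ^ 2 - k * Real.sqrt (1 - k ^ 2)) ≤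
        norm2 ((k * η * norm2 ε) • u +
          Real.sqrt (1 - k ^ 2 * norm2 ε ^ 2) • ε + (k * norm2 ε) • cross ε u) ∧
      0 < 1 - k ^ 2 - k * Real.sqrt (1 - k ^ 2) := by
  
  have h2 : (0:ℝ) < Real.sqrt 2 := Real.sqrt_pos.2 (by norm_num)
  have hks : k * Real.sqrt 2 < 1 := (lt_div_iff₀ h2).1 hk
  have hsq2 : Real.sqrt 2 ^ 2 = 2 := Real.sq_sqrt (by norm_num)
  have hk2 : 2*k^2 < 1 := by nlinarith
  have hr0 : 0 ≤ Real.sqrt (1 - k^2) := Real.sqrt_nonneg _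
  have hr2 : Real.sqrt (1 - k^2) ^ 2 = 1 - k^2 := Real.sq_sqrt (by nlinarith)
  have hpos : 0 < 1 - k ^ 2 - k * Real.sqrt (1 - k ^ 2) := by
    have hkr : k < Real.sqrt (1 - k^2) :=
      (Real.lt_sqrt hk0.le).2 (by nlinarith)
    nlinarith
  refine ⟨?_, hpos⟩
  have hN0 : 0 ≤ norm2 ε := norm2_nonneg ε
  have hN1 : norm2 ε ≤ 1 := by nlinarith [sq_nonneg η]
  have hs0 : 0 ≤ Real.sqrt (1 - k^2 * norm2 ε ^ 2) := Real.sqrt_nonneg _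
  have hs2 : Real.sqrt (1 - k^2 * norm2 ε ^ 2) ^ 2 = 1 - k^2 * norm2 ε ^ 2 :=
    Real.sq_sqrt (by nlinarith)
  have hd : (dotp ε u)^2 ≤ norm2 ε := by
    have h := norm2_nonneg (cross ε u)
    rw [stmt10_lagrange, hu] at h; linarith
  have hη : η^2 = 1 - norm2 ε := by linarith
  rw [stmt10_expand, hu]
  have hkey := stmt10_key (norm2 ε) (dotp ε u) η k
    (Real.sqrt (1 - k^2 * norm2 ε ^ 2)) (Real.sqrt (1 - k^2))
    (Real.sqrt (norm2 ε)) |η| (Real.sqrt (1 + norm2 ε))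
    hN0 hη hd hs2 hs0 hr2 hr0 hk0 hk2
    (Real.sqrt_nonneg _) (Real.sq_sqrt hN0) (abs_nonneg _)
    (by rw [sq_abs]; exact hη)
    (Real.sqrt_nonneg _) (Real.sq_sqrt (by linarith))
  linarith [hkey]
end
end

section
/- Let 0 < k < 1/√2 and let u ∈ ℝ³ be a unit vector. For R ∈ SO(3), define Γ(R) := R 𝓡(2 arcsin(k |R|_I²), u), where 𝓡(θ,u) = I + sin θ [u]ₓ + (1 − cos θ)[u]ₓ². Then V(Γ(R)) := 1 − √(1 − |Γ(R)|_I²) = 0 if and only if R = I. -/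
open Matrix

set_option maxHeartbeats 1000000

noncomputable section

lemma aux_le_one {a b c : ℝ} (h : a * a + b * b + c * c = 1) : a ≤ 1 := by
  nlinarith [sq_nonneg (a-1), sq_nonneg b, sq_nonneg c]

lemma orth_entries {X : Matrix (Fin 3) (Fin 3) ℝ} (hX : Xᵀ * X = 1) (i j : Fin 3) :
    X 0 i * X 0 j + X 1 i * X 1 j + X 2 i * X 2 j = if i = j then 1 else 0 := by
  have := congrFun (congrFun hX i) j
  simpa [Matrix.mul_apply, Fin.sum_univ_three, Matrix.one_apply, Matrix.transpose_apply] using this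

lemma orth_trace_eq_three {X : Matrix (Fin 3) (Fin 3) ℝ} (hX : Xᵀ * X = 1)
    (ht : X.trace = 3) : X = 1 := by
  have h00 := orth_entries hX 0 0
  have h11 := orth_entries hX 1 1
  have h22 := orth_entries hX 2 2
  simp at h00 h11 h22
  have htr : X 0 0 + X 1 1 + X 2 2 = 3 := by
    simpa [Matrix.trace_fin_three] using ht
  have l0 := aux_le_one h00
  have l1 : X 1 1 ≤ 1 := aux_le_one (by linarith [h11] : X 1 1 * X 1 1 + X 2 1 * X 2 1 + X 0 1 * X 0 1 = 1)
  have l2 : X 2 2 ≤ 1 := aux_le_one (by linarith [h22] : X 2 2 * X 2 2 + X 0 2 * X 0 2 + X 1 2 * X 1 2 = 1)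
  have hd0 : X 0 0 = 1 := by linarith
  have hd1 : X 1 1 = 1 := by linarith
  have hd2 : X 2 2 = 1 := by linarith
  have z10 : X 1 0 = 0 := by nlinarith [h00, sq_nonneg (X 1 0), sq_nonneg (X 2 0)]
  have z20 : X 2 0 = 0 := by nlinarith [h00, sq_nonneg (X 1 0), sq_nonneg (X 2 0)]
  have z01 : X 0 1 = 0 := by nlinarith [h11, sq_nonneg (X 0 1), sq_nonneg (X 2 1)]
  have z21 : X 2 1 = 0 := by nlinarith [h11, sq_nonneg (X 0 1), sq_nonneg (X 2 1)]
  have z02 : X 0 2 = 0 := by nlinarith [h22, sq_nonneg (X 0 2), sq_nonneg (X 1 2)]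
  have z12 : X 1 2 = 0 := by nlinarith [h22, sq_nonneg (X 0 2), sq_nonneg (X 1 2)]
  ext i j
  fin_cases i <;> fin_cases j <;>
    simp [Matrix.one_apply, hd0, hd1, hd2, z10, z20, z01, z21, z02, z12]

lemma orth_trace_le {X : Matrix (Fin 3) (Fin 3) ℝ} (hX : Xᵀ * X = 1) : X.trace ≤ 3 := by
  have h00 := orth_entries hX 0 0
  have h11 := orth_entries hX 1 1
  have h22 := orth_entries hX 2 2
  simp at h00 h11 h22
  have l0 := aux_le_one h00
  have l1 : X 1 1 ≤ 1 := aux_le_one (by linarith [h11] : X 1 1 * X 1 1 + X 2 1 * X 2 1 + X 0 1 * X 0 1 = 1)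
  have l2 : X 2 2 ≤ 1 := aux_le_one (by linarith [h22] : X 2 2 * X 2 2 + X 0 2 * X 0 2 + X 1 2 * X 1 2 = 1)
  have : X.trace = X 0 0 + X 1 1 + X 2 2 := Matrix.trace_fin_three X
  linarith

lemma so3_trace_ge {X : Matrix (Fin 3) (Fin 3) ℝ} (hX : SO3 X) : -1 ≤ X.trace := by
  obtain ⟨ho, hd⟩ := hX
  have h1 : X * X.adjugate = 1 := by rw [Matrix.mul_adjugate, hd, one_smul]
  have hadj : X.adjugate = Xᵀ := by
    calc X.adjugate = (Xᵀ * X) * X.adjugate := by rw [ho, one_mul]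
    _ = Xᵀ * (X * X.adjugate) := by rw [Matrix.mul_assoc]
    _ = Xᵀ := by rw [h1, mul_one]
  have e0 := congrFun (congrFun hadj 0) 0
  have e1 := congrFun (congrFun hadj 1) 1
  have e2 := congrFun (congrFun hadj 2) 2
  simp [Matrix.adjugate_fin_three, Matrix.transpose_apply] at e0 e1 e2
  have h00 := orth_entries ho 0 0
  have h11 := orth_entries ho 1 1
  have h22 := orth_entries ho 2 2
  simp at h00 h11 h22
  have : X.trace = X 0 0 + X 1 1 + X 2 2 := Matrix.trace_fin_three X
  nlinarith [sq_nonneg (X 0 1 - X 1 0), sq_nonneg (X 0 2 - X 2 0), sq_nonneg (X 1 2 - X 2 1), e0, e1, e2, h00, h11, h22]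

lemma rod_orth (θ : ℝ) (u : Fin 3 → ℝ) (hu : norm2 u = 1) :
    (rodrigues θ u)ᵀ * rodrigues θ u = 1 := by
  have hu' : u 0 ^ 2 + u 1 ^ 2 + u 2 ^ 2 = 1 := by
    simpa [norm2, dotp, Fin.sum_univ_three, sq] using hu
  have hsc := Real.sin_sq_add_cos_sq θ
  ext i j
  fin_cases i <;> fin_cases j <;>
    simp [rodrigues, skew, Matrix.mul_apply, Matrix.transpose_apply, Fin.sum_univ_three,
      Matrix.one_apply, Matrix.add_apply, Matrix.smul_apply, Matrix.vecHead, Matrix.vecTail] <;>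
    first
    | linear_combination (u 1^2 + u 2^2) * hsc + ((u 1^2 + u 2^2) * (1 - Real.cos θ)^2) * hu'
    | linear_combination (u 0^2 + u 2^2) * hsc + ((u 0^2 + u 2^2) * (1 - Real.cos θ)^2) * hu'
    | linear_combination (u 0^2 + u 1^2) * hsc + ((u 0^2 + u 1^2) * (1 - Real.cos θ)^2) * hu'
    | linear_combination (-(u 0 * u 1)) * hsc + (-(u 0 * u 1) * (1 - Real.cos θ)^2) * hu'
    | linear_combination (-(u 0 * u 2)) * hsc + (-(u 0 * u 2) * (1 - Real.cos θ)^2) * hu'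
    | linear_combination (-(u 1 * u 2)) * hsc + (-(u 1 * u 2) * (1 - Real.cos θ)^2) * hu'

lemma rod_trace (θ : ℝ) (u : Fin 3 → ℝ) (hu : norm2 u = 1) :
    (rodrigues θ u).trace = 3 - 2 * (1 - Real.cos θ) := by
  have hu' : u 0 ^ 2 + u 1 ^ 2 + u 2 ^ 2 = 1 := by
    simpa [norm2, dotp, Fin.sum_univ_three, sq] using hu
  simp [rodrigues, skew, Matrix.trace_fin_three, Matrix.mul_apply, Fin.sum_univ_three,
    Matrix.add_apply, Matrix.smul_apply, Matrix.one_apply, Matrix.vecHead, Matrix.vecTail]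
  linear_combination (-2 * (1 - Real.cos θ)) * hu'

/-- With `0 < k < 1/√2`, a unit vector `u`, and the warped
attitude `Γ(R) = R 𝓡(2 arcsin(k |R|_I²), u)`, one has
`V(Γ(R)) = 1 − √(1 − |Γ(R)|_I²) = 0` iff `R = I`. -/
theorem stmt11 (k : ℝ) (hk0 : 0 < k) (hk : k < 1 / Real.sqrt 2)
    (u : Fin 3 → ℝ) (hu : norm2 u = 1)
    (R : Matrix (Fin 3) (Fin 3) ℝ) (hR : SO3 R) :
    1 - Real.sqrt (1 - attDist2 (R * rodrigues (2 * Real.arcsin (k * attDist2 R)) u)) = 0 ↔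
      R = 1 := by
  have h2 : (1 : ℝ) < Real.sqrt 2 := by
    rw [show (1:ℝ) = Real.sqrt 1 by simp]
    exact Real.sqrt_lt_sqrt (by norm_num) (by norm_num)
  have hk1 : k < 1 := lt_trans hk (by rw [div_lt_one (by positivity)]; exact h2)
  constructor
  · intro h
    set s := attDist2 R with hs
    set θ := 2 * Real.arcsin (k * s) with hθ
    have htr3 : (1 : Matrix (Fin 3) (Fin 3) ℝ).trace = 3 := by
      simp [Matrix.trace_fin_three, Matrix.one_apply]
    have hsval : s = (3 - R.trace) / 4 := by
      rw [hs, attDist2, Matrix.trace_sub, htr3]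
    have hs0 : 0 ≤ s := by
      have := orth_trace_le hR.1; rw [hsval]; linarith
    have hs1 : s ≤ 1 := by
      have := so3_trace_ge hR; rw [hsval]; linarith
    have hks0 : 0 ≤ k * s := mul_nonneg hk0.le hs0
    have hks1 : k * s ≤ 1 := by nlinarith
    have hΓorth : (R * rodrigues θ u)ᵀ * (R * rodrigues θ u) = 1 := by
      rw [Matrix.transpose_mul, Matrix.mul_assoc, ← Matrix.mul_assoc Rᵀ, hR.1, one_mul,
        rod_orth θ u hu]
    have hA : attDist2 (R * rodrigues θ u) = 0 := by
      have h1 : Real.sqrt (1 - attDist2 (R * rodrigues θ u)) = 1 := by linarith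
      have := (Real.sqrt_eq_one.mp h1)
      linarith
    have hΓtr : (R * rodrigues θ u).trace = 3 := by
      have h0 : (1 - R * rodrigues θ u).trace = 0 := by
        have := hA; rw [attDist2] at this; linarith
      rw [Matrix.trace_sub, htr3] at h0; linarith
    have hΓ : R * rodrigues θ u = 1 := orth_trace_eq_three hΓorth hΓtr
    have hrr : rodrigues θ u * (rodrigues θ u)ᵀ = 1 :=
      mul_eq_one_comm.mp (rod_orth θ u hu)
    have hRval : R = (rodrigues θ u)ᵀ := by
      calc R = R * (rodrigues θ u * (rodrigues θ u)ᵀ) := by rw [hrr, mul_one]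
      _ = (R * rodrigues θ u) * (rodrigues θ u)ᵀ := by rw [Matrix.mul_assoc]
      _ = (rodrigues θ u)ᵀ := by rw [hΓ, one_mul]
    have hRtr : R.trace = 3 - 2 * (1 - Real.cos θ) := by
      rw [hRval, Matrix.trace_transpose, rod_trace θ u hu]
    have hsin : Real.sin (Real.arcsin (k * s)) = k * s :=
      Real.sin_arcsin (by linarith) hks1
    have hcos : Real.cos θ = 1 - 2 * (k * s) ^ 2 := by
      rw [hθ, Real.cos_two_mul]
      have := Real.sin_sq_add_cos_sq (Real.arcsin (k * s))
      rw [hsin] at this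
      nlinarith
    have hseq : s = (k * s) ^ 2 := by
      linear_combination hsval - (1/4 : ℝ) * hRtr - (1/2 : ℝ) * hcos
    have hk2 : k ^ 2 < 1 / 2 := by
      have h1 : k ^ 2 < (1 / Real.sqrt 2) ^ 2 := by
        exact pow_lt_pow_left₀ hk hk0.le (by norm_num)
      have h2' : (1 / Real.sqrt 2 : ℝ) ^ 2 = 1 / 2 := by
        rw [div_pow, one_pow, Real.sq_sqrt (by norm_num : (0:ℝ) ≤ 2)]
      linarith [h2' ▸ h1]
    have hsz : s = 0 := by nlinarith
    have hRtr3 : R.trace = 3 := by rw [hsval] at hsz; linarith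
    exact orth_trace_eq_three hR.1 hRtr3
  · intro h
    subst h
    have hA : attDist2 (1 : Matrix (Fin 3) (Fin 3) ℝ) = 0 := by
      simp [attDist2]
    rw [hA]
    simp only [mul_zero, Real.arcsin_zero, mul_zero]
    have hrz : rodrigues 0 u = 1 := by simp [rodrigues]
    rw [hrz, one_mul, hA]
    simp
end
end

section
/- Let 0 < k < 1/√2 and let u ∈ ℝ³ be a unit vector. For R ∈ SO(3), define Γ(R) := R 𝓡(2 arcsin(k |R|_I²), u), where 𝓡(θ,u) = I + sin θ [u]ₓ + (1 − cos θ)[u]ₓ². Then with α₁ := (1 − k² − k√(1 − k²))/2 and α₂ := 1 + k + k²/4, one has α₁ |R|_I² ≤ 1 − √(1 − |Γ(R)|_I²) ≤ α₂ |R|_I² for all R ∈ SO(3). -/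
set_option maxHeartbeats 1000000


open Matrix

noncomputable section

lemma trace_formula (R : Matrix (Fin 3) (Fin 3) ℝ) (θ : ℝ) (u : Fin 3 → ℝ)
    (hu : u 0 ^ 2 + u 1 ^ 2 + u 2 ^ 2 = 1) :
    attDist2 (R * rodrigues θ u) =
      (3 - (Real.cos θ * (R 0 0 + R 1 1 + R 2 2)
        + (1 - Real.cos θ) * (dotp u (R.mulVec u))
        - 2 * Real.sin θ * (dotp (psi R) u))) / 4 := by
  simp only [attDist2, rodrigues, skew, dotp, psi, Matrix.mulVec, Matrix.trace,
    Matrix.diag, Matrix.mul_apply, Matrix.sub_apply, Matrix.add_apply,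
    Matrix.smul_apply, Matrix.one_apply, Fin.sum_univ_three, smul_eq_mul,
    Matrix.cons_val', Matrix.cons_val_zero, Matrix.cons_val_one, Matrix.head_cons,
    Matrix.empty_val', Matrix.cons_val_fin_one, Matrix.head_fin_const, dotProduct, Matrix.one_fin_three, Matrix.vecHead, Matrix.vecTail, Function.comp]
  norm_num [Matrix.vecHead, Matrix.vecTail, Matrix.cons_val_two, Matrix.tail_cons]
  linear_combination ((1 - Real.cos θ) * (R 0 0 + R 1 1 + R 2 2)) * hu

lemma aux_dot_le (s0 s1 s2 b0 b1 b2 : ℝ) (h1 : s0^2+s1^2+s2^2 = 1)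
    (h2 : b0^2+b1^2+b2^2 = 1) :
    -1 ≤ s0*b0+s1*b1+s2*b2 ∧ s0*b0+s1*b1+s2*b2 ≤ 1 := by
  constructor
  · nlinarith [sq_nonneg (s0+b0), sq_nonneg (s1+b1), sq_nonneg (s2+b2)]
  · nlinarith [sq_nonneg (s0-b0), sq_nonneg (s1-b1), sq_nonneg (s2-b2)]

lemma aux_diag_le (a d g e b h i c f : ℝ) (h1 : a^2+d^2+g^2 = 1)
    (h2 : b^2+e^2+h^2 = 1) (h3 : c^2+f^2+i^2 = 1) : a + e + i ≤ 3 := by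
  nlinarith [sq_nonneg (a-1), sq_nonneg (e-1), sq_nonneg (i-1), sq_nonneg d, sq_nonneg g,
    sq_nonneg b, sq_nonneg h, sq_nonneg c, sq_nonneg f, sq_nonneg (a+1), sq_nonneg (e+1), sq_nonneg (i+1)]

lemma aux_trace_lb (s T : ℝ) (h : s = (3 - T) * (1 + T)) (hs : 0 ≤ s) (h3 : T ≤ 3) : -1 ≤ T := by
  nlinarith

lemma so3_key (R : Matrix (Fin 3) (Fin 3) ℝ) (hR : SO3 R) (u : Fin 3 → ℝ)
    (hu : u 0 ^ 2 + u 1 ^ 2 + u 2 ^ 2 = 1) :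
    R 0 0 + R 1 1 + R 2 2 ≤ 3 ∧ -1 ≤ R 0 0 + R 1 1 + R 2 2 ∧
    dotp u (R.mulVec u) ≤ 1 ∧ -1 ≤ dotp u (R.mulVec u) ∧
    2 * (1 - (3 - (R 0 0 + R 1 1 + R 2 2)) / 4) * (1 - dotp u (R.mulVec u)) +
        (dotp (psi R) u) ^ 2 =
      4 * ((3 - (R 0 0 + R 1 1 + R 2 2)) / 4) * (1 - (3 - (R 0 0 + R 1 1 + R 2 2)) / 4) := by
  obtain ⟨ho, hd⟩ := hR
  have hro : R * Rᵀ = 1 := mul_eq_one_comm.mp ho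
  have hadj : Rᵀ = R.adjugate := by
    have h1 : R * R.adjugate = 1 := by rw [Matrix.mul_adjugate, hd, one_smul]
    calc Rᵀ = Rᵀ * (R * R.adjugate) := by rw [h1, mul_one]
      _ = (Rᵀ * R) * R.adjugate := by rw [mul_assoc]
      _ = R.adjugate := by rw [ho, one_mul]
  -- column orthonormality
  have o00 : R 0 0 * R 0 0 + R 1 0 * R 1 0 + R 2 0 * R 2 0 = 1 := by
    have := congrFun (congrFun ho 0) 0
    simpa [Matrix.mul_apply, Fin.sum_univ_three, Matrix.one_apply] using this
  have o11 : R 0 1 * R 0 1 + R 1 1 * R 1 1 + R 2 1 * R 2 1 = 1 := by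
    have := congrFun (congrFun ho 1) 1
    simpa [Matrix.mul_apply, Fin.sum_univ_three, Matrix.one_apply] using this
  have o22 : R 0 2 * R 0 2 + R 1 2 * R 1 2 + R 2 2 * R 2 2 = 1 := by
    have := congrFun (congrFun ho 2) 2
    simpa [Matrix.mul_apply, Fin.sum_univ_three, Matrix.one_apply] using this
  have o01 : R 0 0 * R 0 1 + R 1 0 * R 1 1 + R 2 0 * R 2 1 = 0 := by
    have := congrFun (congrFun ho 0) 1
    simpa [Matrix.mul_apply, Fin.sum_univ_three, Matrix.one_apply] using this
  have o02 : R 0 0 * R 0 2 + R 1 0 * R 1 2 + R 2 0 * R 2 2 = 0 := by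
    have := congrFun (congrFun ho 0) 2
    simpa [Matrix.mul_apply, Fin.sum_univ_three, Matrix.one_apply] using this
  have o12 : R 0 1 * R 0 2 + R 1 1 * R 1 2 + R 2 1 * R 2 2 = 0 := by
    have := congrFun (congrFun ho 1) 2
    simpa [Matrix.mul_apply, Fin.sum_univ_three, Matrix.one_apply] using this
  -- row orthonormality
  have r00 : R 0 0 * R 0 0 + R 0 1 * R 0 1 + R 0 2 * R 0 2 = 1 := by
    have := congrFun (congrFun hro 0) 0
    simpa [Matrix.mul_apply, Fin.sum_univ_three, Matrix.one_apply] using this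
  have r11 : R 1 0 * R 1 0 + R 1 1 * R 1 1 + R 1 2 * R 1 2 = 1 := by
    have := congrFun (congrFun hro 1) 1
    simpa [Matrix.mul_apply, Fin.sum_univ_three, Matrix.one_apply] using this
  have r22 : R 2 0 * R 2 0 + R 2 1 * R 2 1 + R 2 2 * R 2 2 = 1 := by
    have := congrFun (congrFun hro 2) 2
    simpa [Matrix.mul_apply, Fin.sum_univ_three, Matrix.one_apply] using this
  have r01 : R 0 0 * R 1 0 + R 0 1 * R 1 1 + R 0 2 * R 1 2 = 0 := by
    have := congrFun (congrFun hro 0) 1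
    simpa [Matrix.mul_apply, Fin.sum_univ_three, Matrix.one_apply] using this
  have r02 : R 0 0 * R 2 0 + R 0 1 * R 2 1 + R 0 2 * R 2 2 = 0 := by
    have := congrFun (congrFun hro 0) 2
    simpa [Matrix.mul_apply, Fin.sum_univ_three, Matrix.one_apply] using this
  have r12 : R 1 0 * R 2 0 + R 1 1 * R 2 1 + R 1 2 * R 2 2 = 0 := by
    have := congrFun (congrFun hro 1) 2
    simpa [Matrix.mul_apply, Fin.sum_univ_three, Matrix.one_apply] using this
  have k00 : R 0 0 = R 1 1 * R 2 2 - R 1 2 * R 2 1 := by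
    have := congrFun (congrFun hadj 0) 0
    simpa [Matrix.adjugate_fin_three, Matrix.transpose_apply, Matrix.cons_val_zero,
      Matrix.cons_val_one, Matrix.head_cons, Matrix.vecHead, Matrix.vecTail] using this
  have k01 : R 1 0 = -(R 0 1 * R 2 2) + R 0 2 * R 2 1 := by
    have := congrFun (congrFun hadj 0) 1
    simpa [Matrix.adjugate_fin_three, Matrix.transpose_apply, Matrix.cons_val_zero,
      Matrix.cons_val_one, Matrix.head_cons, Matrix.vecHead, Matrix.vecTail] using this
  have k02 : R 2 0 = R 0 1 * R 1 2 - R 0 2 * R 1 1 := by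
    have := congrFun (congrFun hadj 0) 2
    simpa [Matrix.adjugate_fin_three, Matrix.transpose_apply, Matrix.cons_val_zero,
      Matrix.cons_val_one, Matrix.head_cons, Matrix.vecHead, Matrix.vecTail] using this
  have k10 : R 0 1 = -(R 1 0 * R 2 2) + R 1 2 * R 2 0 := by
    have := congrFun (congrFun hadj 1) 0
    simpa [Matrix.adjugate_fin_three, Matrix.transpose_apply, Matrix.cons_val_zero,
      Matrix.cons_val_one, Matrix.head_cons, Matrix.vecHead, Matrix.vecTail] using this
  have k11 : R 1 1 = R 0 0 * R 2 2 - R 0 2 * R 2 0 := by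
    have := congrFun (congrFun hadj 1) 1
    simpa [Matrix.adjugate_fin_three, Matrix.transpose_apply, Matrix.cons_val_zero,
      Matrix.cons_val_one, Matrix.head_cons, Matrix.vecHead, Matrix.vecTail] using this
  have k12 : R 2 1 = -(R 0 0 * R 1 2) + R 0 2 * R 1 0 := by
    have := congrFun (congrFun hadj 1) 2
    simpa [Matrix.adjugate_fin_three, Matrix.transpose_apply, Matrix.cons_val_zero,
      Matrix.cons_val_one, Matrix.head_cons, Matrix.vecHead, Matrix.vecTail] using this
  have k20 : R 0 2 = R 1 0 * R 2 1 - R 1 1 * R 2 0 := by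
    have := congrFun (congrFun hadj 2) 0
    simpa [Matrix.adjugate_fin_three, Matrix.transpose_apply, Matrix.cons_val_zero,
      Matrix.cons_val_one, Matrix.head_cons, Matrix.vecHead, Matrix.vecTail] using this
  have k21 : R 1 2 = -(R 0 0 * R 2 1) + R 0 1 * R 2 0 := by
    have := congrFun (congrFun hadj 2) 1
    simpa [Matrix.adjugate_fin_three, Matrix.transpose_apply, Matrix.cons_val_zero,
      Matrix.cons_val_one, Matrix.head_cons, Matrix.vecHead, Matrix.vecTail] using this
  have k22 : R 2 2 = R 0 0 * R 1 1 - R 0 1 * R 1 0 := by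
    have := congrFun (congrFun hadj 2) 2
    simpa [Matrix.adjugate_fin_three, Matrix.transpose_apply, Matrix.cons_val_zero,
      Matrix.cons_val_one, Matrix.head_cons, Matrix.vecHead, Matrix.vecTail] using this
  have hI1 : (R 2 1 - R 1 2)^2 + (R 0 2 - R 2 0)^2 + (R 1 0 - R 0 1)^2 = (3 - (R 0 0 + R 1 1 + R 2 2)) * (1 + (R 0 0 + R 1 1 + R 2 2)) := by
    linear_combination o00 + o11 + o22 - 2 * k00 - 2 * k11 - 2 * k22
  have hRu : (R 0 0*u 0 + R 0 1*u 1 + R 0 2*u 2)^2 + (R 1 0*u 0 + R 1 1*u 1 + R 1 2*u 2)^2 + (R 2 0*u 0 + R 2 1*u 1 + R 2 2*u 2)^2 = 1 := by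
    linear_combination (u 0)^2 * o00 + (u 1)^2 * o11 + (u 2)^2 * o22 + 2*u 0*u 1*o01 + 2*u 0*u 2*o02 + 2*u 1*u 2*o12 + hu
  have hRtu : (R 0 0*u 0 + R 1 0*u 1 + R 2 0*u 2)^2 + (R 0 1*u 0 + R 1 1*u 1 + R 2 1*u 2)^2 + (R 0 2*u 0 + R 1 2*u 1 + R 2 2*u 2)^2 = 1 := by
    linear_combination (u 0)^2 * r00 + (u 1)^2 * r11 + (u 2)^2 * r22 + 2*u 0*u 1*r01 + 2*u 0*u 2*r02 + 2*u 1*u 2*r12 + hu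
  have hq2 : u 0 * (R 0 0 * (R 0 0*u 0 + R 0 1*u 1 + R 0 2*u 2) + R 0 1 * (R 1 0*u 0 + R 1 1*u 1 + R 1 2*u 2) + R 0 2 * (R 2 0*u 0 + R 2 1*u 1 + R 2 2*u 2)) + u 1 * (R 1 0 * (R 0 0*u 0 + R 0 1*u 1 + R 0 2*u 2) + R 1 1 * (R 1 0*u 0 + R 1 1*u 1 + R 1 2*u 2) + R 1 2 * (R 2 0*u 0 + R 2 1*u 1 + R 2 2*u 2)) + u 2 * (R 2 0 * (R 0 0*u 0 + R 0 1*u 1 + R 0 2*u 2) + R 2 1 * (R 1 0*u 0 + R 1 1*u 1 + R 1 2*u 2) + R 2 2 * (R 2 0*u 0 + R 2 1*u 1 + R 2 2*u 2)) = ((R 0 0 + R 1 1 + R 2 2) + 1) * (u 0 * (R 0 0*u 0 + R 0 1*u 1 + R 0 2*u 2) + u 1 * (R 1 0*u 0 + R 1 1*u 1 + R 1 2*u 2) + u 2 * (R 2 0*u 0 + R 2 1*u 1 + R 2 2*u 2)) - (R 0 0 + R 1 1 + R 2 2) := by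
    linear_combination ((u 1)^2 + (u 2)^2) * k00 + ((u 0)^2 + (u 2)^2) * k11 + ((u 0)^2 + (u 1)^2) * k22
      - u 0 * u 1 * (k01 + k10) - u 0 * u 2 * (k02 + k20) - u 1 * u 2 * (k12 + k21) - (R 0 0 + R 1 1 + R 2 2) * hu
  have hT3 : (R 0 0 + R 1 1 + R 2 2) ≤ 3 := by
    have := aux_diag_le (R 0 0) (R 1 0) (R 2 0) (R 1 1) (R 0 1) (R 2 1) (R 2 2) (R 0 2) (R 1 2) (by linarith [o00]) (by linarith [o11]) (by linarith [o22])
    linarith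
  have hTm1 : -1 ≤ (R 0 0 + R 1 1 + R 2 2) := by
    refine aux_trace_lb ((R 2 1 - R 1 2)^2 + (R 0 2 - R 2 0)^2 + (R 1 0 - R 0 1)^2) _ hI1 ?_ hT3
    positivity
  refine ⟨hT3, hTm1, ?_, ?_, ?_⟩
  · simp only [dotp, Matrix.mulVec, dotProduct, Fin.sum_univ_three]
    have := aux_dot_le (u 0) (u 1) (u 2) (R 0 0 * u 0 + R 0 1 * u 1 + R 0 2 * u 2) (R 1 0 * u 0 + R 1 1 * u 1 + R 1 2 * u 2) (R 2 0 * u 0 + R 2 1 * u 1 + R 2 2 * u 2) (by linarith [hu]) (by linarith [hRu])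
    linarith [this.2]
  · simp only [dotp, Matrix.mulVec, dotProduct, Fin.sum_univ_three]
    have := aux_dot_le (u 0) (u 1) (u 2) (R 0 0 * u 0 + R 0 1 * u 1 + R 0 2 * u 2) (R 1 0 * u 0 + R 1 1 * u 1 + R 1 2 * u 2) (R 2 0 * u 0 + R 2 1 * u 1 + R 2 2 * u 2) (by linarith [hu]) (by linarith [hRu])
    linarith [this.1]
  · simp only [dotp, psi, Matrix.mulVec, dotProduct, Fin.sum_univ_three,
      Matrix.cons_val_zero, Matrix.cons_val_one, Matrix.cons_val_two, Matrix.tail_cons, Matrix.head_cons]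
    linear_combination (((R 2 1 - R 1 2)/2)^2 + ((R 0 2 - R 2 0)/2)^2 + ((R 1 0 - R 0 1)/2)^2) * hu + (1/4) * hI1 - (1/4) * hRu - (1/4) * hRtu + (1/2) * hq2

lemma aux_S2 (k x q0 : ℝ) (hk0 : 0 < k) (hk2 : k^2 < 1/2)
    (hx0 : 0 ≤ x) (hx1 : x ≤ 1) (hq02 : q0^2 = 1-k^2) (hq0k : k ≤ q0) :
    4*(x*(1-x))*(1-k^2*x^2) ≤ (k*(1+x-2*x^2)+q0)^2 := by
  have h1x2 : (0:ℝ) ≤ 1 + x - 2*x^2 := by nlinarith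
  nlinarith [mul_nonneg (mul_nonneg (by linarith : (0:ℝ) ≤ 2*k) (sub_nonneg.mpr hq0k)) h1x2,
    mul_nonneg (by nlinarith : (0:ℝ) ≤ 1-2*k^2) (sq_nonneg (1-2*x)),
    mul_nonneg (sq_nonneg k) (sq_nonneg (x-2))]

lemma aux_low (k x q0 A B gm s : ℝ) (hk0 : 0 < k) (hx0 : 0 ≤ x)
    (hAB : A*B = k*x*gm) (hA2 : A^2 = (1-x)*(1-k^2*x^2)) (hB2 : B^2 = k^2*x^3)
    (hS : 2*gm ≤ k*(1+x-2*x^2)+q0) (hs_ub : s ≤ A+B) :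
    (1 - k^2 - k*q0)/2 * x ≤ 1 - s := by
  nlinarith [sq_nonneg (1-(A+B)), hAB, hA2, hB2,
    mul_le_mul_of_nonneg_left hS (mul_nonneg hk0.le hx0)]

lemma aux_up (k x A B s : ℝ) (hk0 : 0 < k) (hx0 : 0 ≤ x) (hx1 : x ≤ 1)
    (hA2 : A^2 = (1-x)*(1-k^2*x^2)) (hA0 : 0 ≤ A) (hA1 : A ≤ 1)
    (hBk : B ≤ k*x) (hlb : A - B ≤ s) : 1 - s ≤ (1 + k + k^2/4)*x := by
  nlinarith [mul_nonneg hA0 (sub_nonneg.mpr hA1), hA2,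
    mul_nonneg (mul_nonneg (sq_nonneg k) hx0) (sq_nonneg (2*x-1))]

lemma main_ineq (k x p q : ℝ) (hk0 : 0 < k) (hk2 : k^2 < 1/2)
    (hx0 : 0 ≤ x) (hx1 : x ≤ 1) (hq1 : q ≤ 1) (hqm1 : -1 ≤ q)
    (hC2 : 2*(1-x)*(1-q) + p^2 = 4*x*(1-x)) :
    (1 - k^2 - k*Real.sqrt (1-k^2))/2 * x ≤
      1 - Real.sqrt ((1 + (1-2*k^2*x^2)*(3-4*x) + 2*k^2*x^2*q - 4*k*x*Real.sqrt (1-k^2*x^2)*p)/4) ∧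
    1 - Real.sqrt ((1 + (1-2*k^2*x^2)*(3-4*x) + 2*k^2*x^2*q - 4*k*x*Real.sqrt (1-k^2*x^2)*p)/4) ≤
      (1 + k + k^2/4) * x := by
  set q0 := Real.sqrt (1-k^2) with hq0d
  have hq02 : q0^2 = 1-k^2 := Real.sq_sqrt (by nlinarith)
  have hq00 : 0 ≤ q0 := Real.sqrt_nonneg _
  have hq0k : k ≤ q0 := by nlinarith
  set m := Real.sqrt (1-k^2*x^2) with hmd
  have hm2 : m^2 = 1-k^2*x^2 := Real.sq_sqrt (by nlinarith)
  have hm0 : 0 ≤ m := Real.sqrt_nonneg _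
  have hm1 : m ≤ 1 := Real.sqrt_le_one.mpr (by nlinarith [sq_nonneg (k*x)])
  by_cases hx : x = 1
  · subst hx
    have hp2 : p^2 = 0 := by linear_combination hC2
    have hp : p = 0 := by
      have := sq_nonneg p; nlinarith
    have htv : (1 + (1-2*k^2*1^2)*(3-4*1) + 2*k^2*1^2*q - 4*k*1*m*p)/4 = k^2*(1+q)/2 := by
      rw [hp]; ring
    rw [htv]
    have h1 : Real.sqrt (k^2*(1+q)/2) ≤ k := by
      have h2 : Real.sqrt (k^2*(1+q)/2) ≤ Real.sqrt (k^2) :=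
        Real.sqrt_le_sqrt (by nlinarith [mul_nonneg (sq_nonneg k) (sub_nonneg.mpr hq1)])
      rwa [Real.sqrt_sq hk0.le] at h2
    have h0 : 0 ≤ Real.sqrt (k^2*(1+q)/2) := Real.sqrt_nonneg _
    constructor
    · nlinarith [sq_nonneg (1-k), mul_nonneg hk0.le hq00]
    · nlinarith [sq_nonneg k]
  · have hx1' : x < 1 := lt_of_le_of_ne hx1 hx
    have h1x : (0:ℝ) < 1 - x := by linarith
    set d := Real.sqrt (1-x) with hdd
    have hd2 : d^2 = 1-x := Real.sq_sqrt h1x.le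
    have hd0 : 0 < d := Real.sqrt_pos.mpr h1x
    have hd1 : d ≤ 1 := Real.sqrt_le_one.mpr (by linarith)
    set sx := Real.sqrt x with hsxd
    have hsx2 : sx^2 = x := Real.sq_sqrt hx0
    have hsx0 : 0 ≤ sx := Real.sqrt_nonneg _
    have hsx1 : sx ≤ 1 := Real.sqrt_le_one.mpr hx1
    set A := d * m with hAd
    set B := k * x * sx with hBd
    set P := k*x*p/(2*d) with hPd
    set w := A - P with hwd
    set g := sx * d with hgd
    have hg0 : 0 ≤ g := by rw [hgd]; positivity
    have hg2 : g^2 = x*(1-x) := by rw [hgd]; linear_combination d^2*hsx2 + x*hd2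
    have hA0 : 0 ≤ A := mul_nonneg hd0.le hm0
    have hA1 : A ≤ 1 := by
      rw [hAd]
      calc d * m ≤ 1 * m := by apply mul_le_mul_of_nonneg_right hd1 hm0
      _ = m := by ring
      _ ≤ 1 := hm1
    have hA2 : A^2 = (1-x)*(1-k^2*x^2) := by rw [hAd]; linear_combination m^2*hd2 + (1-x)*hm2
    have hB2 : B^2 = k^2*x^3 := by rw [hBd]; linear_combination (k^2*x^2)*hsx2
    have hB0 : 0 ≤ B := by rw [hBd]; positivity
    have hBk : B ≤ k*x := by
      have := mul_nonneg (mul_nonneg hk0.le hx0) (sub_nonneg.mpr hsx1)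
      rw [hBd]; linarith [this]
    have hAB : A*B = k*x*(g*m) := by rw [hAd, hBd, hgd]; ring
    have hPval : 2*d*P = k*x*p := by rw [hPd]; field_simp
    have hP4 : 4*(1-x)*P^2 = k^2*x^2*p^2 := by
      linear_combination (2*d*P + k*x*p) * hPval - 4*P^2*hd2
    have hp2 : p^2 ≤ 4*x*(1-x) := by
      have := mul_nonneg (sub_nonneg.mpr hx1) (sub_nonneg.mpr hq1)
      linarith [hC2, this]
    have hP2 : P^2 ≤ k^2*x^3 := by
      have hmul : k^2*x^2*p^2 ≤ k^2*x^2*(4*x*(1-x)) :=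
        mul_le_mul_of_nonneg_left hp2 (by positivity)
      have h5 : (4*(1-x))*P^2 ≤ (4*(1-x))*(k^2*x^3) := by linarith [hP4, hmul]
      exact le_of_mul_le_mul_left h5 (by linarith)
    have hPB : |P| ≤ B := by
      rw [← hB2] at hP2
      have hs : Real.sqrt (P^2) ≤ Real.sqrt (B^2) := Real.sqrt_le_sqrt hP2
      rwa [Real.sqrt_sq_eq_abs, Real.sqrt_sq hB0] at hs
    have habs := abs_le.mp hPB
    have hkey : 4*(1-x)*((1 + (1-2*k^2*x^2)*(3-4*x) + 2*k^2*x^2*q - 4*k*x*m*p)/4)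
        = (2*(1-x)*m - k*x*p)^2 := by
      linear_combination (-4*(1-x)^2) * hm2 - (k^2*x^2) * hC2
    have hwval : 2*d*w = 2*(1-x)*m - k*x*p := by
      rw [hwd, hAd, hPd]; field_simp; linear_combination (2*m)*hd2
    have ht : (1 + (1-2*k^2*x^2)*(3-4*x) + 2*k^2*x^2*q - 4*k*x*m*p)/4 = w^2 := by
      have h4 : 4*(1-x)*((1 + (1-2*k^2*x^2)*(3-4*x) + 2*k^2*x^2*q - 4*k*x*m*p)/4)
          = 4*(1-x)*w^2 := by
        rw [hkey, ← hwval]; linear_combination (4*w^2)*hd2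
      have hne : (4:ℝ)*(1-x) ≠ 0 := by positivity
      exact mul_left_cancel₀ hne h4
    rw [ht, Real.sqrt_sq_eq_abs]
    have hw_ub : |w| ≤ A + B := by
      rw [hwd, abs_le]; constructor <;> linarith [habs.1, habs.2]
    have hw_lb : A - B ≤ |w| := le_trans (by rw [hwd]; linarith [habs.2]) (le_abs_self w)
    constructor
    · have hS2 := aux_S2 k x q0 hk0 hk2 hx0 hx1 hq02 hq0k
      have heq : (2*(g*m))^2 = 4*(x*(1-x))*(1-k^2*x^2) := by
        linear_combination (4*m^2)*hg2 + (4*(x*(1-x)))*hm2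
      have hgm2 : (2*(g*m))^2 ≤ (k*(1+x-2*x^2)+q0)^2 := by rw [heq]; exact hS2
      have hS : 2*(g*m) ≤ k*(1+x-2*x^2)+q0 := by
        have hs := Real.sqrt_le_sqrt hgm2
        have h1x2 : (0:ℝ) ≤ (1-x)*(1+2*x) := mul_nonneg (by linarith) (by linarith)
        have hR0 : 0 ≤ k*(1+x-2*x^2)+q0 := by
          have := mul_nonneg hk0.le h1x2
          linarith [this]
        rwa [Real.sqrt_sq (by positivity : (0:ℝ) ≤ 2*(g*m)), Real.sqrt_sq hR0] at hs
      exact aux_low k x q0 A B (g*m) |w| hk0 hx0 hAB hA2 hB2 hS hw_ub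
    · exact aux_up k x A B |w| hk0 hx0 hx1 hA2 hA0 hA1 hBk hw_lb

/-- With `0 < k < 1/√2`, a unit vector `u`, and the warped
attitude `Γ(R) = R 𝓡(2 arcsin(k |R|_I²), u)`, setting
`α₁ = (1 − k² − k√(1 − k²))/2` and `α₂ = 1 + k + k²/4`, one has
`α₁ |R|_I² ≤ 1 − √(1 − |Γ(R)|_I²) ≤ α₂ |R|_I²` for all `R ∈ SO(3)`. -/
theorem stmt12 (k : ℝ) (hk0 : 0 < k) (hk : k < 1 / Real.sqrt 2)
    (u : Fin 3 → ℝ) (hu : norm2 u = 1)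
    (R : Matrix (Fin 3) (Fin 3) ℝ) (hR : SO3 R) :
    (1 - k ^ 2 - k * Real.sqrt (1 - k ^ 2)) / 2 * attDist2 R ≤
        1 - Real.sqrt (1 - attDist2 (R * rodrigues (2 * Real.arcsin (k * attDist2 R)) u)) ∧
      1 - Real.sqrt (1 - attDist2 (R * rodrigues (2 * Real.arcsin (k * attDist2 R)) u)) ≤
        (1 + k + k ^ 2 / 4) * attDist2 R := by
  have hu' : u 0 ^ 2 + u 1 ^ 2 + u 2 ^ 2 = 1 := by
    have h := hu
    simp only [norm2, dotp, Fin.sum_univ_three] at h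
    linear_combination h
  obtain ⟨hT3, hTm1, hq1, hqm1, hC2⟩ := so3_key R hR u hu'
  have hk1 : k^2 < 1/2 := by
    have h2 : (0:ℝ) < Real.sqrt 2 := Real.sqrt_pos.mpr (by norm_num)
    have h22 : Real.sqrt 2 ^ 2 = 2 := Real.sq_sqrt (by norm_num)
    have h3 : k * Real.sqrt 2 < 1 := by
      have := (lt_div_iff₀ h2).mp hk
      linarith
    nlinarith [h3, h22, hk0, h2]
  have hxval : attDist2 R = (3 - (R 0 0 + R 1 1 + R 2 2))/4 := by
    simp only [attDist2, Matrix.trace, Matrix.diag, Fin.sum_univ_three, Matrix.sub_apply,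
      Matrix.one_apply_eq]
    ring
  set x := (3 - (R 0 0 + R 1 1 + R 2 2))/4 with hxd
  have hx0 : 0 ≤ x := by rw [hxd]; linarith
  have hx1 : x ≤ 1 := by rw [hxd]; linarith
  rw [hxval]
  have hklt1 : k < 1 := by nlinarith
  have hkx0 : 0 ≤ k*x := mul_nonneg hk0.le hx0
  have hkx1 : k*x ≤ 1 := by nlinarith [mul_le_mul_of_nonneg_left hx1 hk0.le]
  have hargn : (0:ℝ) ≤ 1 - (k*x)^2 := by nlinarith
  have harg : 1 - (k*x)^2 = 1 - k^2*x^2 := by ring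
  have hsin : Real.sin (2*Real.arcsin (k*x)) = 2*k*x*Real.sqrt (1-k^2*x^2) := by
    rw [Real.sin_two_mul, Real.sin_arcsin (by linarith) hkx1, Real.cos_arcsin, harg]
    ring
  have hcos : Real.cos (2*Real.arcsin (k*x)) = 1 - 2*k^2*x^2 := by
    rw [Real.cos_two_mul, Real.cos_arcsin, Real.sq_sqrt hargn]
    ring
  rw [trace_formula R (2*Real.arcsin (k*x)) u hu']
  have hteq : 1 - (3 - (Real.cos (2*Real.arcsin (k*x)) * (R 0 0 + R 1 1 + R 2 2)
        + (1 - Real.cos (2*Real.arcsin (k*x))) * (dotp u (R.mulVec u))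
        - 2 * Real.sin (2*Real.arcsin (k*x)) * (dotp (psi R) u)))/4
      = (1 + (1-2*k^2*x^2)*(3-4*x) + 2*k^2*x^2*(dotp u (R.mulVec u))
        - 4*k*x*Real.sqrt (1-k^2*x^2)*(dotp (psi R) u))/4 := by
    rw [hsin, hcos, hxd]; ring
  rw [hteq]
  exact main_ineq k x (dotp (psi R) u) (dotp u (R.mulVec u)) hk0 hk1 hx0 hx1 hq1 hqm1 hC2
end
end

section
/- Let {u₁, u₂, u₃} be an orthonormal set of vectors in ℝ³ and define u₄ := −u₁, u₅ := −u₂, u₆ := −u₃. Then for every ε ∈ ℝ³ and every q ∈ {1, …, 6}, one has max over m ∈ {1, …, 6} of |ε · (u_q − u_m)| ≥ ‖ε‖/√3. -/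
open Matrix

noncomputable section

lemma abs_avg' {x y M : ℝ} (ha : |x - y| ≤ M) (hb : |x + y| ≤ M) : |y| ≤ M := by
  rw [abs_le] at *; constructor <;> [linarith [ha.1, hb.2]; linarith [ha.2, hb.1]]

lemma parseval' (u1 u2 u3 : Fin 3 → ℝ)
    (h1 : norm2 u1 = 1) (h2 : norm2 u2 = 1) (h3 : norm2 u3 = 1)
    (h12 : dotp u1 u2 = 0) (h13 : dotp u1 u3 = 0) (h23 : dotp u2 u3 = 0)
    (ε : Fin 3 → ℝ) :
    norm2 ε = (dotp ε u1)^2 + (dotp ε u2)^2 + (dotp ε u3)^2 := by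
  simp only [norm2, dotp, Fin.sum_univ_three] at h1 h2 h3 h12 h13 h23 ⊢
  set U : Matrix (Fin 3) (Fin 3) ℝ := Matrix.of ![u1, u2, u3] with hUdef
  have hU : U * Uᵀ = 1 := by
    ext i j
    fin_cases i <;> fin_cases j <;>
      simp [hUdef, Matrix.mul_apply, Matrix.transpose_apply, Matrix.vecHead,
        Matrix.vecTail, Fin.sum_univ_three, Matrix.one_apply, mul_comm] <;>
      linarith
  have hUt : Uᵀ * U = 1 := mul_eq_one_comm.mp hU
  have e : ∀ j k : Fin 3, u1 j * u1 k + u2 j * u2 k + u3 j * u3 k = if j = k then 1 else 0 := by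
    intro j k
    have := congrFun (congrFun hUt j) k
    simpa [hUdef, Matrix.mul_apply, Fin.sum_univ_three, Matrix.one_apply] using this
  have e00 : u1 0 * u1 0 + u2 0 * u2 0 + u3 0 * u3 0 = 1 := by simpa using e 0 0
  have e11 : u1 1 * u1 1 + u2 1 * u2 1 + u3 1 * u3 1 = 1 := by simpa using e 1 1
  have e22 : u1 2 * u1 2 + u2 2 * u2 2 + u3 2 * u3 2 = 1 := by simpa using e 2 2
  have e01 : u1 0 * u1 1 + u2 0 * u2 1 + u3 0 * u3 1 = 0 := by simpa using e 0 1
  have e02 : u1 0 * u1 2 + u2 0 * u2 2 + u3 0 * u3 2 = 0 := by simpa using e 0 2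
  have e12 : u1 1 * u1 2 + u2 1 * u2 2 + u3 1 * u3 2 = 0 := by simpa using e 1 2
  linear_combination -((ε 0)^2 * e00 + (ε 1)^2 * e11 + (ε 2)^2 * e22 +
    2*(ε 0)*(ε 1)*e01 + 2*(ε 0)*(ε 2)*e02 + 2*(ε 1)*(ε 2)*e12)

/-- For an orthonormal set `{u₁, u₂, u₃}` in ℝ³ extended by
`u₄ = −u₁`, `u₅ = −u₂`, `u₆ = −u₃`, for every `ε ∈ ℝ³` and index `q`,
the maximum over `m` of `|ε · (u_q − u_m)|` is at least `‖ε‖/√3`. -/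
theorem stmt13 (u1 u2 u3 : Fin 3 → ℝ)
    (h1 : norm2 u1 = 1) (h2 : norm2 u2 = 1) (h3 : norm2 u3 = 1)
    (h12 : dotp u1 u2 = 0) (h13 : dotp u1 u3 = 0) (h23 : dotp u2 u3 = 0)
    (ε : Fin 3 → ℝ) (q : Fin 6) :
    Real.sqrt (norm2 ε) / Real.sqrt 3 ≤
      Finset.univ.sup' Finset.univ_nonempty (fun m : Fin 6 =>
        |dotp ε (![u1, u2, u3, -u1, -u2, -u3] q - ![u1, u2, u3, -u1, -u2, -u3] m)|) := by
  have hpar := parseval' u1 u2 u3 h1 h2 h3 h12 h13 h23 ε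
  set v : Fin 6 → Fin 3 → ℝ := ![u1, u2, u3, -u1, -u2, -u3] with hv
  set f : Fin 6 → ℝ := fun m => |dotp ε (v q - v m)| with hf
  set M := Finset.univ.sup' Finset.univ_nonempty f with hM
  have hm : ∀ m, f m ≤ M := fun m => Finset.le_sup' f (Finset.mem_univ m)
  have hM0 : 0 ≤ M := le_trans (abs_nonneg _) (hm q)
  have dsub : ∀ x y : Fin 3 → ℝ, dotp ε (x - y) = dotp ε x - dotp ε y := by
    intro x y; simp [dotp, Fin.sum_univ_three]; try ring
  have hd : ∀ m, |dotp ε (v q) - dotp ε (v m)| ≤ M := by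
    intro m; rw [← dsub]; exact hm m
  have dneg : ∀ x : Fin 3 → ℝ, dotp ε (-x) = -dotp ε x := by
    intro x; simp [dotp, Fin.sum_univ_three]; try ring
  have hv3 : v 3 = -u1 := rfl
  have hv4 : v 4 = -u2 := rfl
  have hv5 : v 5 = -u3 := rfl
  have hc1 : |dotp ε u1| ≤ M := by
    refine abs_avg' (x := dotp ε (v q)) ?_ ?_
    · simpa [hv] using hd 0
    · have := hd 3; rw [hv3, dneg, sub_neg_eq_add] at this; exact this
  have hc2 : |dotp ε u2| ≤ M := by
    refine abs_avg' (x := dotp ε (v q)) ?_ ?_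
    · simpa [hv] using hd 1
    · have := hd 4; rw [hv4, dneg, sub_neg_eq_add] at this; exact this
  have hc3 : |dotp ε u3| ≤ M := by
    refine abs_avg' (x := dotp ε (v q)) ?_ ?_
    · simpa [hv] using hd 2
    · have := hd 5; rw [hv5, dneg, sub_neg_eq_add] at this; exact this
  have hsum : norm2 ε ≤ 3 * M^2 := by
    nlinarith [sq_abs (dotp ε u1), sq_abs (dotp ε u2), sq_abs (dotp ε u3),
      abs_nonneg (dotp ε u1), abs_nonneg (dotp ε u2), abs_nonneg (dotp ε u3)]
  rw [div_le_iff₀ (by positivity : (0:ℝ) < Real.sqrt 3)]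
  have ha : Real.sqrt (norm2 ε) ≤ Real.sqrt (3 * M^2) := Real.sqrt_le_sqrt hsum
  have hb : Real.sqrt (3 * M^2) = Real.sqrt 3 * M := by
    rw [Real.sqrt_mul (by norm_num), Real.sqrt_sq hM0]
  linarith
end
end

section
/- Let (η, ε) ∈ ℝ × ℝ³ with η² + ‖ε‖² = 1, let 0 < k < 1/√2, and let u ∈ ℝ³ be a unit vector. If η √(1 − k²‖ε‖⁴) = k ‖ε‖² (ε · u), then ‖ε‖² ≥ (−1 + √(1 + 4k²))/(2k²). -/
open Matrix

noncomputable section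

/-- For a unit quaternion `(η, ε)`, `0 < k < 1/√2` and a unit
vector `u`, if `η √(1 − k²‖ε‖⁴) = k ‖ε‖² (ε · u)` then
`‖ε‖² ≥ (−1 + √(1 + 4k²))/(2k²)`. -/
theorem stmt16 (η k : ℝ) (ε u : Fin 3 → ℝ) (hq : η ^ 2 + norm2 ε = 1)
    (hk0 : 0 < k) (hk : k < 1 / Real.sqrt 2) (hu : norm2 u = 1)
    (hsing : η * Real.sqrt (1 - k ^ 2 * norm2 ε ^ 2) = k * norm2 ε * dotp ε u) :
    (-1 + Real.sqrt (1 + 4 * k ^ 2)) / (2 * k ^ 2) ≤ norm2 ε := by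
  set s := norm2 ε with hs
  have hs0 : 0 ≤ s := by
    simp only [hs, norm2, dotp, Fin.sum_univ_three]
    nlinarith [sq_nonneg (ε 0), sq_nonneg (ε 1), sq_nonneg (ε 2)]
  have hs1 : s ≤ 1 := by nlinarith [sq_nonneg η]
  have hk2 : k ^ 2 < 1 / 2 := by
    have h2 : (0:ℝ) < Real.sqrt 2 := by positivity
    have : k * Real.sqrt 2 < 1 := by
      rw [div_eq_mul_inv, one_mul] at hk
      calc k * Real.sqrt 2 < (Real.sqrt 2)⁻¹ * Real.sqrt 2 := by
            exact mul_lt_mul_of_pos_right hk h2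
        _ = 1 := inv_mul_cancel₀ h2.ne'
    nlinarith [Real.sq_sqrt (by norm_num : (2:ℝ) ≥ 0)]
  have hnn : 0 ≤ 1 - k ^ 2 * s ^ 2 := by nlinarith
  have hcs : dotp ε u ^ 2 ≤ s := by
    have := hu
    simp only [hs, norm2, dotp, Fin.sum_univ_three] at *
    nlinarith [sq_nonneg (ε 0 * u 1 - ε 1 * u 0), sq_nonneg (ε 0 * u 2 - ε 2 * u 0),
      sq_nonneg (ε 1 * u 2 - ε 2 * u 1)]
  have hsq : η ^ 2 * (1 - k ^ 2 * s ^ 2) = k ^ 2 * s ^ 2 * dotp ε u ^ 2 := by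
    have h := congrArg (fun x => x ^ 2) hsing
    simp only [mul_pow] at h
    rw [Real.sq_sqrt hnn] at h
    linarith [h]
  have hkey : k ^ 2 * s ^ 2 + s - 1 ≥ 0 := by
    nlinarith [mul_nonneg (mul_nonneg (sq_nonneg k) (sq_nonneg s)) (sub_nonneg.2 hcs)]
  have hle : Real.sqrt (1 + 4 * k ^ 2) ≤ 1 + 2 * k ^ 2 * s := by
    have h1 : (1:ℝ) + 4 * k ^ 2 ≤ (1 + 2 * k ^ 2 * s) ^ 2 := by nlinarith
    calc Real.sqrt (1 + 4 * k ^ 2) ≤ Real.sqrt ((1 + 2 * k ^ 2 * s) ^ 2) :=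
          Real.sqrt_le_sqrt h1
      _ = 1 + 2 * k ^ 2 * s := Real.sqrt_sq (by positivity)
  rw [div_le_iff₀ (by positivity)]
  linarith
end
end

section
/- Let {u₁, u₂, u₃} be an orthonormal set in ℝ³ with u₄ := −u₁, u₅ := −u₂, u₆ := −u₃, let 0 < k < 1/√2, and let (η, ε) ∈ ℝ × ℝ³ with η² + ‖ε‖² = 1. For m ∈ {1, …, 6}, define η_m := η √(1 − k²‖ε‖⁴) − k ‖ε‖² (ε · u_m). If η_q = 0 for some q ∈ {1, …, 6}, then max over m ∈ {1, …, 6} of |η_m| ≥ (−1 + √(1 + 4k²))^{3/2} / (2√6 k²). -/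
open Matrix

noncomputable section

set_option maxHeartbeats 1000000 in
/-- With `{u₁,u₂,u₃}` orthonormal, `u_{m+3} = −u_m`,
`0 < k < 1/√2`, a unit quaternion `(η, ε)` and
`η_m = η √(1 − k²‖ε‖⁴) − k ‖ε‖² (ε · u_m)`, if `η_q = 0` for some `q`, then
`max_m |η_m| ≥ (−1 + √(1 + 4k²))^{3/2} / (2√6 k²)`. -/
theorem stmt17 (u1 u2 u3 : Fin 3 → ℝ)
    (h1 : norm2 u1 = 1) (h2 : norm2 u2 = 1) (h3 : norm2 u3 = 1)
    (h12 : dotp u1 u2 = 0) (h13 : dotp u1 u3 = 0) (h23 : dotp u2 u3 = 0)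
    (k η : ℝ) (ε : Fin 3 → ℝ) (hq : η ^ 2 + norm2 ε = 1)
    (hk0 : 0 < k) (hk : k < 1 / Real.sqrt 2)
    (q : Fin 6)
    (hsing : η * Real.sqrt (1 - k ^ 2 * norm2 ε ^ 2) -
        k * norm2 ε * dotp ε (![u1, u2, u3, -u1, -u2, -u3] q) = 0) :
    (-1 + Real.sqrt (1 + 4 * k ^ 2)) ^ ((3 : ℝ) / 2) / (2 * Real.sqrt 6 * k ^ 2) ≤
      Finset.univ.sup' Finset.univ_nonempty (fun m : Fin 6 =>
        |η * Real.sqrt (1 - k ^ 2 * norm2 ε ^ 2) -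
          k * norm2 ε * dotp ε (![u1, u2, u3, -u1, -u2, -u3] m)|) := by
  have hvneg : ∀ x y : Fin 3 → ℝ, dotp x (-y) = -dotp x y := by
    intro x y
    simp [dotp, mul_neg, ← Finset.sum_neg_distrib]
  simp only [norm2, dotp, Fin.sum_univ_three] at h1 h2 h3 h12 h13 h23
  set s := norm2 ε with hsdef
  have hs0 : 0 ≤ s := by
    rw [hsdef]
    simp only [norm2, dotp]
    exact Finset.sum_nonneg fun i _ => mul_self_nonneg _
  have hs1 : s ≤ 1 := by linarith [sq_nonneg η]
  have hk2 : k ^ 2 < 1 / 2 := by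
    have h2p : (0:ℝ) < Real.sqrt 2 := Real.sqrt_pos.mpr (by norm_num)
    have h2' : Real.sqrt 2 ^ 2 = 2 := Real.sq_sqrt (by norm_num)
    have hks : k * Real.sqrt 2 < 1 := (lt_div_iff₀ h2p).mp hk
    nlinarith [mul_pos hk0 h2p]
  -- column orthonormality
  have hU : (Matrix.of ![u1, u2, u3]) * (Matrix.of ![u1, u2, u3])ᵀ = 1 := by
    ext i j
    fin_cases i <;> fin_cases j <;>
      simp only [Matrix.mul_apply, Matrix.transpose_apply, Matrix.of_apply, Fin.sum_univ_three,
      Matrix.cons_val_zero, Matrix.cons_val_one, Matrix.head_cons, Matrix.cons_val_two,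
      Matrix.tail_cons] <;>
      norm_num [Matrix.one_apply, Fin.ext_iff] <;>
      first
        | linear_combination h1 | linear_combination h2 | linear_combination h3
        | linear_combination h12 | linear_combination h13 | linear_combination h23
  have hU' : (Matrix.of ![u1, u2, u3])ᵀ * (Matrix.of ![u1, u2, u3]) = 1 := by
    rw [mul_eq_one_comm] at hU; exact hU
  have e00 := congrFun (congrFun hU' 0) 0
  have e11 := congrFun (congrFun hU' 1) 1
  have e22 := congrFun (congrFun hU' 2) 2
  have e01 := congrFun (congrFun hU' 0) 1
  have e02 := congrFun (congrFun hU' 0) 2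
  have e12 := congrFun (congrFun hU' 1) 2
  simp only [Matrix.mul_apply, Matrix.transpose_apply, Matrix.of_apply, Fin.sum_univ_three,
      Matrix.cons_val_zero, Matrix.cons_val_one, Matrix.head_cons, Matrix.cons_val_two,
      Matrix.tail_cons] at e00 e11 e22 e01 e02 e12
  norm_num [Matrix.one_apply, Fin.ext_iff] at e00 e11 e22 e01 e02 e12
  have hpar : dotp ε u1 ^ 2 + dotp ε u2 ^ 2 + dotp ε u3 ^ 2 = s := by
    rw [hsdef]
    simp only [norm2, dotp, Fin.sum_univ_three]
    linear_combination (ε 0)^2 * e00 + (ε 1)^2 * e11 + (ε 2)^2 * e22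
      + 2*(ε 0)*(ε 1)*e01 + 2*(ε 0)*(ε 2)*e02 + 2*(ε 1)*(ε 2)*e12
  set M := Finset.univ.sup' Finset.univ_nonempty (fun m : Fin 6 =>
      |η * Real.sqrt (1 - k ^ 2 * s ^ 2) -
        k * s * dotp ε (![u1, u2, u3, -u1, -u2, -u3] m)|) with hMdef
  have hle : ∀ m : Fin 6, |η * Real.sqrt (1 - k ^ 2 * s ^ 2) -
      k * s * dotp ε (![u1, u2, u3, -u1, -u2, -u3] m)| ≤ M :=
    fun m => Finset.le_sup' (fun m : Fin 6 =>
      |η * Real.sqrt (1 - k ^ 2 * s ^ 2) -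
        k * s * dotp ε (![u1, u2, u3, -u1, -u2, -u3] m)|) (Finset.mem_univ m)
  have hM0 : 0 ≤ M := le_trans (abs_nonneg _) (hle 0)
  have habs : ∀ x y : ℝ, |x - y| ≤ M → |x + y| ≤ M → y ^ 2 ≤ M ^ 2 := by
    intro x y hxy hxy'
    have ha := abs_le.mp hxy
    have hb := abs_le.mp hxy'
    exact sq_le_sq' (by linarith [ha.2, hb.1]) (by linarith [ha.1, hb.2])
  have t0 := hle 0
  have t1 := hle 1
  have t2 := hle 2
  have t3 := hle 3
  have t4 := hle 4
  have t5 := hle 5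
  simp only [hvneg, mul_neg, sub_neg_eq_add,
    show (![u1, u2, u3, -u1, -u2, -u3] 0) = u1 from rfl,
    show (![u1, u2, u3, -u1, -u2, -u3] 1) = u2 from rfl,
    show (![u1, u2, u3, -u1, -u2, -u3] 2) = u3 from rfl,
    show (![u1, u2, u3, -u1, -u2, -u3] 3) = -u1 from rfl,
    show (![u1, u2, u3, -u1, -u2, -u3] 4) = -u2 from rfl,
    show (![u1, u2, u3, -u1, -u2, -u3] 5) = -u3 from rfl] at t0 t1 t2 t3 t4 t5
  have b1 : (k * s * dotp ε u1) ^ 2 ≤ M ^ 2 := habs _ _ t0 t3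
  have b2 : (k * s * dotp ε u2) ^ 2 ≤ M ^ 2 := habs _ _ t1 t4
  have b3 : (k * s * dotp ε u3) ^ 2 ≤ M ^ 2 := habs _ _ t2 t5
  have hsum : k ^ 2 * s ^ 2 * s = (k * s * dotp ε u1) ^ 2 + (k * s * dotp ε u2) ^ 2
      + (k * s * dotp ε u3) ^ 2 := by linear_combination (-(k ^ 2 * s ^ 2)) * hpar
  have h3M : k ^ 2 * s ^ 2 * s ≤ 3 * M ^ 2 := by rw [hsum]; linarith [b1, b2, b3]
  have hMge : Real.sqrt (k ^ 2 * s ^ 2 * s / 3) ≤ M := by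
    have := Real.sqrt_le_sqrt (show k ^ 2 * s ^ 2 * s / 3 ≤ M ^ 2 by linarith)
    rwa [Real.sqrt_sq hM0] at this
  -- singular condition
  have hc1 : dotp ε u1 ^ 2 ≤ s := by linarith [hpar, sq_nonneg (dotp ε u2), sq_nonneg (dotp ε u3)]
  have hc2 : dotp ε u2 ^ 2 ≤ s := by linarith [hpar, sq_nonneg (dotp ε u1), sq_nonneg (dotp ε u3)]
  have hc3 : dotp ε u3 ^ 2 ≤ s := by linarith [hpar, sq_nonneg (dotp ε u1), sq_nonneg (dotp ε u2)]
  have hcs : ∃ c : ℝ, c ^ 2 ≤ s ∧ η * Real.sqrt (1 - k ^ 2 * s ^ 2) = k * s * c := by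
    fin_cases q <;>
      simp only [hvneg, mul_neg, sub_neg_eq_add,
        show (![u1, u2, u3, -u1, -u2, -u3] 0) = u1 from rfl,
        show (![u1, u2, u3, -u1, -u2, -u3] 1) = u2 from rfl,
        show (![u1, u2, u3, -u1, -u2, -u3] 2) = u3 from rfl,
        show (![u1, u2, u3, -u1, -u2, -u3] 3) = -u1 from rfl,
        show (![u1, u2, u3, -u1, -u2, -u3] 4) = -u2 from rfl,
        show (![u1, u2, u3, -u1, -u2, -u3] 5) = -u3 from rfl,
        show ((⟨0, by norm_num⟩ : Fin 6)) = (0 : Fin 6) from by decide,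
        show ((⟨1, by norm_num⟩ : Fin 6)) = (1 : Fin 6) from by decide,
        show ((⟨2, by norm_num⟩ : Fin 6)) = (2 : Fin 6) from by decide,
        show ((⟨3, by norm_num⟩ : Fin 6)) = (3 : Fin 6) from by decide,
        show ((⟨4, by norm_num⟩ : Fin 6)) = (4 : Fin 6) from by decide,
        show ((⟨5, by norm_num⟩ : Fin 6)) = (5 : Fin 6) from by decide] at hsing <;>
      first
        | exact ⟨dotp ε u1, hc1, by linear_combination hsing⟩
        | exact ⟨dotp ε u2, hc2, by linear_combination hsing⟩
        | exact ⟨dotp ε u3, hc3, by linear_combination hsing⟩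
        | exact ⟨-(dotp ε u1), by rw [neg_pow]; simpa using hc1, by linear_combination hsing⟩
        | exact ⟨-(dotp ε u2), by rw [neg_pow]; simpa using hc2, by linear_combination hsing⟩
        | exact ⟨-(dotp ε u3), by rw [neg_pow]; simpa using hc3, by linear_combination hsing⟩
  obtain ⟨c, hc, heq⟩ := hcs
  have ha2 : Real.sqrt (1 - k ^ 2 * s ^ 2) ^ 2 = 1 - k ^ 2 * s ^ 2 :=
    Real.sq_sqrt (by
      have hss : s * s ≤ 1 := by simpa using mul_le_mul hs1 hs1 hs0 zero_le_one
      have := mul_le_mul_of_nonneg_left hss (sq_nonneg k)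
      linarith [this, hk2])
  have hkey : 1 ≤ s + k ^ 2 * s ^ 2 := by
    have h : (η * Real.sqrt (1 - k ^ 2 * s ^ 2)) ^ 2 = (k * s * c) ^ 2 := by rw [heq]
    have hmul : (k * s) ^ 2 * c ^ 2 ≤ (k * s) ^ 2 * s :=
      mul_le_mul_of_nonneg_left hc (sq_nonneg _)
    have e1 : (1 - s) * (1 - k ^ 2 * s ^ 2) = (k * s) ^ 2 * c ^ 2 := by
      linear_combination h - η ^ 2 * ha2 - (1 - k ^ 2 * s ^ 2) * hq
    have h' : (1 - s) * (1 - k ^ 2 * s ^ 2) ≤ k ^ 2 * s ^ 2 * s := by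
      rw [e1]; linarith [hmul]
    linarith [h', mul_nonneg (mul_nonneg (sq_nonneg k) (sq_nonneg s)) hs0,
      mul_le_mul_of_nonneg_left hs1 (mul_nonneg (mul_nonneg (sq_nonneg k) hs0) hs0)]
  -- final chain
  set t := -1 + Real.sqrt (1 + 4 * k ^ 2) with htdef
  have ht0 : 0 ≤ t := by
    have : (1:ℝ) ≤ Real.sqrt (1 + 4 * k ^ 2) := by
      have h := Real.sqrt_le_sqrt (show (1:ℝ) ≤ 1 + 4 * k ^ 2 by linarith [sq_nonneg k])
      rwa [Real.sqrt_one] at h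
    rw [htdef]; linarith
  have htle : t ≤ 2 * k ^ 2 * s := by
    have h := Real.sqrt_le_sqrt (show 1 + 4 * k ^ 2 ≤ (1 + 2 * k ^ 2 * s) ^ 2 by
      linarith [mul_le_mul_of_nonneg_left hkey (show (0:ℝ) ≤ 4 * k ^ 2 by positivity)])
    rw [Real.sqrt_sq (by linarith [mul_nonneg (mul_nonneg (by norm_num : (0:ℝ) ≤ 2) (sq_nonneg k)) hs0])] at h
    rw [htdef]; linarith
  have hrpow : t ^ ((3:ℝ) / 2) = Real.sqrt (t ^ 3) := by
    rw [Real.sqrt_eq_rpow, ← Real.rpow_natCast t 3, ← Real.rpow_mul ht0]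
    norm_num
  have h6 : Real.sqrt 6 ^ 2 = 6 := Real.sq_sqrt (by norm_num)
  have hden : 2 * Real.sqrt 6 * k ^ 2 = Real.sqrt (24 * k ^ 4) := by
    rw [show (24:ℝ) * k ^ 4 = (2 * Real.sqrt 6 * k ^ 2) ^ 2 by linear_combination (-(4 * k ^ 4)) * h6]
    rw [Real.sqrt_sq (by positivity)]
  have hcube : t ^ 3 ≤ (2 * k ^ 2 * s) ^ 3 := pow_le_pow_left₀ ht0 htle 3
  calc t ^ ((3:ℝ) / 2) / (2 * Real.sqrt 6 * k ^ 2)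
      = Real.sqrt (t ^ 3 / (24 * k ^ 4)) := by
        rw [hrpow, hden, Real.sqrt_div (by positivity)]
    _ ≤ Real.sqrt (k ^ 2 * s ^ 2 * s / 3) := by
        apply Real.sqrt_le_sqrt
        rw [div_le_div_iff₀ (by positivity) (by norm_num)]
        linarith [hcube]
    _ ≤ M := hMge
end
end
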